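/- The rank map R is injective on finitely supported functions ℕ → ℕ: if R(u) = R(v) then u = v. That is, a medal distribution is uniquely determined by its numerical rank. -/
import Mathlib


/-- The rank of a medal word `w : ℕ →₀ ℕ`. -/
noncomputable def medalRank (w : ℕ →₀ ℕ) : ℚ :=
  ∑ n ∈ w.support,
    (2 : ℚ) ^ (-(((∑ k ∈ Finset.range n, w k) + n : ℕ) : ℤ)) *
      (1 - (2 : ℚ) ^ (-(w n : ℤ)))

namespace MedalAux

noncomputable def term (w : ℕ → ℕ) (n : ℕ) : ℚ :=
  (2 : ℚ) ^ (-(((∑ k ∈ Finset.range n, w k) + n : ℕ) : ℤ)) *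
    (1 - (2 : ℚ) ^ (-(w n : ℤ)))

lemma two_zpow_pos (z : ℤ) : (0:ℚ) < 2 ^ z := zpow_pos (by norm_num) z

lemma two_zpow_le_one (m : ℕ) : (2:ℚ) ^ (-(m:ℤ)) ≤ 1 := by
  rw [zpow_neg, zpow_natCast]
  exact inv_le_one_of_one_le₀ (one_le_pow₀ (by norm_num))

lemma term_nonneg (w : ℕ → ℕ) (n : ℕ) : 0 ≤ term w n :=
  mul_nonneg (two_zpow_pos _).le (by linarith [two_zpow_le_one (w n)])

lemma term_eq_zero (w : ℕ → ℕ) (n : ℕ) (h : w n = 0) : term w n = 0 := by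
  simp [term, h]

lemma medalRank_eq_sum (w : ℕ →₀ ℕ) (N : ℕ) (h : w.support ⊆ Finset.range N) :
    medalRank w = ∑ n ∈ Finset.range N, term (w : ℕ → ℕ) n := by
  rw [medalRank]
  exact Finset.sum_subset h (fun n _ hn =>
    term_eq_zero _ n (Finsupp.notMem_support_iff.mp hn))

lemma sum_term_nonneg (w : ℕ → ℕ) (N : ℕ) : 0 ≤ ∑ n ∈ Finset.range N, term w n :=
  Finset.sum_nonneg fun n _ => term_nonneg w n

lemma sum_term_le (w : ℕ → ℕ) (N : ℕ) :
    ∑ n ∈ Finset.range N, term w n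
      ≤ 1 - (2:ℚ) ^ (-(((∑ k ∈ Finset.range N, w k) + N : ℕ) : ℤ)) := by
  induction N with
  | zero => simp
  | succ N ih =>
      rw [Finset.sum_range_succ]
      have hS : ((∑ k ∈ Finset.range (N+1), w k) + (N+1) : ℕ)
          = ((∑ k ∈ Finset.range N, w k) + N) + w N + 1 := by
        rw [Finset.sum_range_succ]; ring
      have h1 : (2:ℚ) ^ (-(((∑ k ∈ Finset.range (N+1), w k) + (N+1) : ℕ) : ℤ))
          = (2:ℚ) ^ (-(((∑ k ∈ Finset.range N, w k) + N : ℕ) : ℤ))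
            * (2:ℚ) ^ (-(w N : ℤ)) * (2:ℚ)^(-1 : ℤ) := by
        rw [hS, ← zpow_add₀ (by norm_num : (2:ℚ) ≠ 0),
          ← zpow_add₀ (by norm_num : (2:ℚ) ≠ 0)]
        push_cast
        ring_nf
      set A := (2:ℚ) ^ (-(((∑ k ∈ Finset.range N, w k) + N : ℕ) : ℤ)) with hA
      have hApos : 0 < A := two_zpow_pos _
      have hB : 0 < (2:ℚ) ^ (-(w N : ℤ)) := two_zpow_pos _
      have : term w N = A * (1 - (2:ℚ) ^ (-(w N : ℤ))) := rfl
      rw [this, h1]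
      have h2 : (2:ℚ)^(-1:ℤ) = 1/2 := by norm_num
      rw [h2]
      nlinarith [mul_pos hApos hB]

lemma sum_term_lt_one (w : ℕ → ℕ) (N : ℕ) : ∑ n ∈ Finset.range N, term w n < 1 := by
  have := sum_term_le w N
  have := two_zpow_pos (-(((∑ k ∈ Finset.range N, w k) + N : ℕ) : ℤ))
  linarith

lemma sum_term_succ (w : ℕ → ℕ) (N : ℕ) :
    ∑ n ∈ Finset.range (N+1), term w n
      = (1 - (2:ℚ) ^ (-(w 0 : ℤ)))
        + (2:ℚ) ^ (-((w 0 : ℤ) + 1)) * ∑ n ∈ Finset.range N, term (fun k => w (k+1)) n := by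
  rw [Finset.sum_range_succ']
  have h0 : term w 0 = 1 - (2:ℚ) ^ (-(w 0 : ℤ)) := by simp [term]
  have h1 : ∀ n, term w (n+1) = (2:ℚ) ^ (-((w 0 : ℤ) + 1)) * term (fun k => w (k+1)) n := by
    intro n
    have hS : ((∑ k ∈ Finset.range (n+1), w k) + (n+1) : ℕ)
        = (w 0 + 1) + ((∑ k ∈ Finset.range n, w (k+1)) + n) := by
      rw [Finset.sum_range_succ']; ring
    unfold term
    rw [hS]
    push_cast
    rw [neg_add, zpow_add₀ (by norm_num : (2:ℚ) ≠ 0)]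
    ring
  rw [Finset.sum_congr rfl (fun n _ => h1 n), ← Finset.mul_sum, h0]
  ring

lemma head_eq {a b : ℕ} {x y : ℚ} (hx0 : 0 ≤ x) (hx1 : x < 1) (hy0 : 0 ≤ y) (hy1 : y < 1)
    (h : (1 - (2:ℚ) ^ (-(a:ℤ))) + (2:ℚ) ^ (-((a:ℤ)+1)) * x
        = (1 - (2:ℚ) ^ (-(b:ℤ))) + (2:ℚ) ^ (-((b:ℤ)+1)) * y) : a = b := by
  have key : ∀ a b : ℕ, ∀ x y : ℚ, x < 1 → 0 ≤ y → a < b →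
      (1 - (2:ℚ) ^ (-(a:ℤ))) + (2:ℚ) ^ (-((a:ℤ)+1)) * x
        < (1 - (2:ℚ) ^ (-(b:ℤ))) + (2:ℚ) ^ (-((b:ℤ)+1)) * y := by
    intro a b x y hx1 hy0 hab
    have hA : (2:ℚ) ^ (-(a:ℤ)) = 2 * (2:ℚ) ^ (-((a:ℤ)+1)) := by
      rw [show (-(a:ℤ)) = 1 + (-((a:ℤ)+1)) by ring,
        zpow_add₀ (by norm_num : (2:ℚ) ≠ 0)]
      norm_num
    have hmono : (2:ℚ) ^ (-(b:ℤ)) ≤ (2:ℚ) ^ (-((a:ℤ)+1)) := by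
      apply zpow_le_zpow_right₀ (by norm_num : (1:ℚ) ≤ 2)
      omega
    have hBpos : (0:ℚ) < (2:ℚ) ^ (-((b:ℤ)+1)) := two_zpow_pos _
    have hApos : (0:ℚ) < (2:ℚ) ^ (-((a:ℤ)+1)) := two_zpow_pos _
    nlinarith
  rcases lt_trichotomy a b with hlt | heq | hgt
  · exact absurd h (ne_of_lt (key a b x y hx1 hy0 hlt))
  · exact heq
  · exact absurd h (ne_of_gt (key b a y x hy1 hx0 hgt))

lemma main : ∀ N : ℕ, ∀ u v : ℕ →₀ ℕ, u.support ⊆ Finset.range N →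
    v.support ⊆ Finset.range N → medalRank u = medalRank v → u = v := by
  intro N
  induction N with
  | zero =>
      intro u v hu hv _
      simp only [Finset.range_zero, Finset.subset_empty] at hu hv
      rw [Finsupp.support_eq_empty.mp hu, Finsupp.support_eq_empty.mp hv]
  | succ N ih =>
      intro u v hu hv h
      have hinj : Set.InjOn (· + 1) ((· + 1) ⁻¹' (u.support : Set ℕ)) :=
        (add_left_injective 1).injOn
      have hinj' : Set.InjOn (· + 1) ((· + 1) ⁻¹' (v.support : Set ℕ)) :=
        (add_left_injective 1).injOn
      set u' := Finsupp.comapDomain (· + 1) u hinj with hu'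
      set v' := Finsupp.comapDomain (· + 1) v hinj' with hv'
      have hu'app : ∀ n, u' n = u (n+1) := fun n => rfl
      have hv'app : ∀ n, v' n = v (n+1) := fun n => rfl
      have hu'supp : u'.support ⊆ Finset.range N := by
        intro n hn
        rw [Finsupp.mem_support_iff, hu'app] at hn
        have := hu (Finsupp.mem_support_iff.mpr hn)
        simp only [Finset.mem_range] at this ⊢
        omega
      have hv'supp : v'.support ⊆ Finset.range N := by
        intro n hn
        rw [Finsupp.mem_support_iff, hv'app] at hn
        have := hv (Finsupp.mem_support_iff.mpr hn)
        simp only [Finset.mem_range] at this ⊢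
        omega
      have hcoe_u : (fun k => u (k+1)) = (u' : ℕ → ℕ) := by
        funext k; exact (hu'app k).symm
      have hcoe_v : (fun k => v (k+1)) = (v' : ℕ → ℕ) := by
        funext k; exact (hv'app k).symm
      have hdec_u : medalRank u = (1 - (2:ℚ) ^ (-(u 0 : ℤ)))
          + (2:ℚ) ^ (-((u 0 : ℤ)+1)) * medalRank u' := by
        rw [medalRank_eq_sum u (N+1) hu, sum_term_succ, hcoe_u,
          ← medalRank_eq_sum u' N hu'supp]
      have hdec_v : medalRank v = (1 - (2:ℚ) ^ (-(v 0 : ℤ)))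
          + (2:ℚ) ^ (-((v 0 : ℤ)+1)) * medalRank v' := by
        rw [medalRank_eq_sum v (N+1) hv, sum_term_succ, hcoe_v,
          ← medalRank_eq_sum v' N hv'supp]
      have hu'0 : 0 ≤ medalRank u' := by
        rw [medalRank_eq_sum u' N hu'supp]; exact sum_term_nonneg _ _
      have hu'1 : medalRank u' < 1 := by
        rw [medalRank_eq_sum u' N hu'supp]; exact sum_term_lt_one _ _
      have hv'0 : 0 ≤ medalRank v' := by
        rw [medalRank_eq_sum v' N hv'supp]; exact sum_term_nonneg _ _
      have hv'1 : medalRank v' < 1 := by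
        rw [medalRank_eq_sum v' N hv'supp]; exact sum_term_lt_one _ _
      rw [hdec_u, hdec_v] at h
      have h0 : u 0 = v 0 := head_eq hu'0 hu'1 hv'0 hv'1 h
      rw [h0] at h
      have hR : medalRank u' = medalRank v' := by
        have hne : (2:ℚ) ^ (-((v 0 : ℤ)+1)) ≠ 0 := (two_zpow_pos _).ne'
        have := add_left_cancel h
        exact mul_left_cancel₀ hne this
      have heq' : u' = v' := ih u' v' hu'supp hv'supp hR
      ext n
      cases n with
      | zero => exact h0
      | succ n =>
          have := DFunLike.congr_fun heq' n
          rw [hu'app, hv'app] at this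
          exact this

end MedalAux

theorem medalRank_injective : Function.Injective medalRank := by
  intro u v h
  obtain ⟨N, hN⟩ := Finset.exists_nat_subset_range (u.support ∪ v.support)
  exact MedalAux.main N u v
    (fun x hx => hN (Finset.mem_union_left _ hx))
    (fun x hx => hN (Finset.mem_union_right _ hx)) h
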